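/- Let k ∈ ℝ³ be nonzero and let h be a trace-free real symmetric 3×3 matrix. Then σ_k(Q)(h) = 0 if and only if there exists a vector Y ∈ ℝ³ such that h_{ij} = k_i (k×Y)_j + k_j (k×Y)_i; that is, the kernel of the symbol of Q on trace-free symmetric matrices equals the image of the symbol of L rot₁. -/
import Mathlib


open scoped BigOperators

/-- The Levi-Civita symbol `ε_{ijk}` on three indices. -/
def eps : Fin 3 → Fin 3 → Fin 3 → ℝ := fun i j k =>
  if (i, j, k) = ((0 : Fin 3), (1 : Fin 3), (2 : Fin 3)) ∨
     (i, j, k) = ((1 : Fin 3), (2 : Fin 3), (0 : Fin 3)) ∨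
     (i, j, k) = ((2 : Fin 3), (0 : Fin 3), (1 : Fin 3)) then 1
  else if (i, j, k) = ((2 : Fin 3), (1 : Fin 3), (0 : Fin 3)) ∨
     (i, j, k) = ((1 : Fin 3), (0 : Fin 3), (2 : Fin 3)) ∨
     (i, j, k) = ((0 : Fin 3), (2 : Fin 3), (1 : Fin 3)) then -1
  else 0

/-- The Kronecker delta `δ_{ij}`. -/
def kdelta (i j : Fin 3) : ℝ := if i = j then 1 else 0

/-- The cross product on `ℝ³`: `(a × b)_i = Σ_{j,l} ε_{ijl} a_j b_l`. -/
def cross (a b : Fin 3 → ℝ) : Fin 3 → ℝ := fun i => ∑ j, ∑ l, eps i j l * a j * b l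

/-- The symbol of `rot₂`:
`(σ_k(rot₂)(h))_{ij} = Σ_{ℓ,m} ( ε_{iℓm} k_ℓ h_{mj} + ε_{jℓm} k_ℓ h_{mi} )`. -/
def sigRot2 (k : Fin 3 → ℝ) (h : Fin 3 → Fin 3 → ℝ) : Fin 3 → Fin 3 → ℝ :=
  fun i j => ∑ l, ∑ m, (eps i l m * k l * h m j + eps j l m * k l * h m i)

/-- The symbol of `Q`:
`(σ_k(Q)(h))_{ij} = 2( 2 Σ_ℓ k_ℓ ( k_i h_{jℓ} + k_j h_{iℓ} )
  − (4/3) (Σ_{ℓ,m} k_ℓ k_m h_{ℓm}) δ_{ij} − 2 |k|² h_{ij}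
  + ( |k|² δ_{ij} − k_i k_j ) (tr h) )`. -/
noncomputable def sigQ (k : Fin 3 → ℝ) (h : Fin 3 → Fin 3 → ℝ) : Fin 3 → Fin 3 → ℝ :=
  fun i j => 2 * (2 * (∑ l, k l * (k i * h j l + k j * h i l))
    - (4/3) * (∑ l, ∑ m, k l * k m * h l m) * kdelta i j
    - 2 * (∑ l, k l ^ 2) * h i j
    + ((∑ l, k l ^ 2) * kdelta i j - k i * k j) * (∑ l, h l l))

/-- for `k ≠ 0` and trace-free symmetric `h`, `σ_k(Q)(h) = 0` iff
`h_{ij} = k_i (k×Y)_j + k_j (k×Y)_i` for some `Y ∈ ℝ³`; the kernel of the symbol of `Q`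
on trace-free symmetric matrices equals the image of the symbol of `L rot₁`. -/
theorem stmt15 (k : Fin 3 → ℝ) (hk : k ≠ 0) (h : Fin 3 → Fin 3 → ℝ)
    (h_symm : ∀ i j, h i j = h j i) (h_tracefree : ∑ i, h i i = 0) :
    (∀ i j, sigQ k h i j = 0) ↔
      ∃ Y : Fin 3 → ℝ, ∀ i j, h i j = k i * cross k Y j + k j * cross k Y i := by
  constructor
  · intro hQ
    have hK : 0 < k 0 ^ 2 + k 1 ^ 2 + k 2 ^ 2 := by
      by_contra hc
      push_neg at hc
      apply hk
      have h0 : k 0 = 0 := by nlinarith [sq_nonneg (k 0), sq_nonneg (k 1), sq_nonneg (k 2)]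
      have h1 : k 1 = 0 := by nlinarith [sq_nonneg (k 0), sq_nonneg (k 1), sq_nonneg (k 2)]
      have h2 : k 2 = 0 := by nlinarith [sq_nonneg (k 0), sq_nonneg (k 1), sq_nonneg (k 2)]
      funext i; fin_cases i <;> simpa
    set K : ℝ := k 0 ^ 2 + k 1 ^ 2 + k 2 ^ 2 with hKdef
    have tr : h 0 0 + h 1 1 + h 2 2 = 0 := by simpa [Fin.sum_univ_three] using h_tracefree
    have e : ∀ i j, 2 * (2 * (k 0 * (k i * h j 0 + k j * h i 0) + k 1 * (k i * h j 1 + k j * h i 1)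
        + k 2 * (k i * h j 2 + k j * h i 2))
      - (4/3) * (k 0 * (k 0 * h 0 0 + k 1 * h 0 1 + k 2 * h 0 2)
        + k 1 * (k 0 * h 1 0 + k 1 * h 1 1 + k 2 * h 1 2)
        + k 2 * (k 0 * h 2 0 + k 1 * h 2 1 + k 2 * h 2 2)) * kdelta i j
      - 2 * K * h i j
      + (K * kdelta i j - k i * k j) * (h 0 0 + h 1 1 + h 2 2)) = 0 := by
      intro i j
      have := hQ i j
      simp only [sigQ, Fin.sum_univ_three] at this
      linear_combination this
    have kd0 : kdelta 0 0 = 1 := by simp [kdelta]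
    have kd1 : kdelta 1 1 = 1 := by simp [kdelta]
    have kd2 : kdelta 2 2 = 1 := by simp [kdelta]
    have kd01 : kdelta 0 1 = 0 := by simp [kdelta]
    have kd02 : kdelta 0 2 = 0 := by simp [kdelta]
    have kd12 : kdelta 1 2 = 0 := by simp [kdelta]
    -- the quantity S = k·h·k vanishes
    set v0 : ℝ := k 0 * h 0 0 + k 1 * h 0 1 + k 2 * h 0 2 with hv0
    set v1 : ℝ := k 0 * h 1 0 + k 1 * h 1 1 + k 2 * h 1 2 with hv1
    set v2 : ℝ := k 0 * h 2 0 + k 1 * h 2 1 + k 2 * h 2 2 with hv2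
    have hKS : K * (k 0 * v0 + k 1 * v1 + k 2 * v2) = 0 := by
      have E00 := e 0 0; have E11 := e 1 1; have E22 := e 2 2
      have E01 := e 0 1; have E02 := e 0 2; have E12 := e 1 2
      rw [kd0] at E00; rw [kd1] at E11; rw [kd2] at E22
      rw [kd01] at E01; rw [kd02] at E02; rw [kd12] at E12
      linear_combination (3/4) * (k 0 ^ 2 * E00 + k 1 ^ 2 * E11 + k 2 ^ 2 * E22
        + 2 * k 0 * k 1 * E01 + 2 * k 0 * k 2 * E02 + 2 * k 1 * k 2 * E12)
        + 3 * k 0 * k 1 * K * (h_symm 0 1) + 3 * k 0 * k 2 * K * (h_symm 0 2)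
        + 3 * k 1 * k 2 * K * (h_symm 1 2)
    have hS : k 0 * v0 + k 1 * v1 + k 2 * v2 = 0 := by
      rcases mul_eq_zero.mp hKS with hc | hc
      · exact absurd hc hK.ne'
      · exact hc
    have E00 := e 0 0; have E11 := e 1 1; have E22 := e 2 2
    have E01 := e 0 1; have E02 := e 0 2; have E12 := e 1 2
    rw [kd0] at E00; rw [kd1] at E11; rw [kd2] at E22
    rw [kd01] at E01; rw [kd02] at E02; rw [kd12] at E12
    have hm00 : K * h 0 0 = 2 * k 0 * v0 := by
      linear_combination (-1/4) * E00 - (2/3) * hS + (1/2) * (K - k 0 ^ 2) * tr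
    have hm11 : K * h 1 1 = 2 * k 1 * v1 := by
      linear_combination (-1/4) * E11 - (2/3) * hS + (1/2) * (K - k 1 ^ 2) * tr
    have hm22 : K * h 2 2 = 2 * k 2 * v2 := by
      linear_combination (-1/4) * E22 - (2/3) * hS + (1/2) * (K - k 2 ^ 2) * tr
    have hm01 : K * h 0 1 = k 0 * v1 + k 1 * v0 := by
      linear_combination (-1/4) * E01 - (1/2) * k 0 * k 1 * tr
    have hm02 : K * h 0 2 = k 0 * v2 + k 2 * v0 := by
      linear_combination (-1/4) * E02 - (1/2) * k 0 * k 2 * tr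
    have hm12 : K * h 1 2 = k 1 * v2 + k 2 * v1 := by
      linear_combination (-1/4) * E12 - (1/2) * k 1 * k 2 * tr
    set Y : Fin 3 → ℝ := fun i =>
      if i = 0 then (v1 * k 2 - v2 * k 1) / K ^ 2
      else if i = 1 then (v2 * k 0 - v0 * k 2) / K ^ 2
      else (v0 * k 1 - v1 * k 0) / K ^ 2 with hYdef
    have hK2 : (K : ℝ) ^ 2 ≠ 0 := pow_ne_zero 2 hK.ne'
    have Y0v : Y 0 = (v1 * k 2 - v2 * k 1) / K ^ 2 := by simp only [hYdef]; norm_num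
    have Y1v : Y 1 = (v2 * k 0 - v0 * k 2) / K ^ 2 := by simp only [hYdef]; norm_num
    have Y2v : Y 2 = (v0 * k 1 - v1 * k 0) / K ^ 2 := by simp only [hYdef]; rfl
    have cr0 : cross k Y 0 = k 1 * Y 2 - k 2 * Y 1 := by
      simp [cross, eps, Fin.sum_univ_three]; ring
    have cr1 : cross k Y 1 = k 2 * Y 0 - k 0 * Y 2 := by
      simp [cross, eps, Fin.sum_univ_three]; ring
    have cr2 : cross k Y 2 = k 0 * Y 1 - k 1 * Y 0 := by
      simp [cross, eps, Fin.sum_univ_three]; ring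
    have c0 : K ^ 2 * cross k Y 0 = K * v0 := by
      rw [cr0, Y2v, Y1v, ← mul_div_assoc, ← mul_div_assoc, div_sub_div_same, mul_comm, div_mul_cancel₀ _ hK2]
      linear_combination (-(k 0)) * hS
    have c1 : K ^ 2 * cross k Y 1 = K * v1 := by
      rw [cr1, Y0v, Y2v, ← mul_div_assoc, ← mul_div_assoc, div_sub_div_same, mul_comm, div_mul_cancel₀ _ hK2]
      linear_combination (-(k 1)) * hS
    have c2 : K ^ 2 * cross k Y 2 = K * v2 := by
      rw [cr2, Y1v, Y0v, ← mul_div_assoc, ← mul_div_assoc, div_sub_div_same, mul_comm, div_mul_cancel₀ _ hK2]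
      linear_combination (-(k 2)) * hS
    refine ⟨Y, ?_⟩
    have g00 : h 0 0 = k 0 * cross k Y 0 + k 0 * cross k Y 0 :=
      mul_left_cancel₀ hK2 (by linear_combination K * hm00 - 2 * k 0 * c0)
    have g11 : h 1 1 = k 1 * cross k Y 1 + k 1 * cross k Y 1 :=
      mul_left_cancel₀ hK2 (by linear_combination K * hm11 - 2 * k 1 * c1)
    have g22 : h 2 2 = k 2 * cross k Y 2 + k 2 * cross k Y 2 :=
      mul_left_cancel₀ hK2 (by linear_combination K * hm22 - 2 * k 2 * c2)
    have g01 : h 0 1 = k 0 * cross k Y 1 + k 1 * cross k Y 0 :=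
      mul_left_cancel₀ hK2 (by linear_combination K * hm01 - k 0 * c1 - k 1 * c0)
    have g02 : h 0 2 = k 0 * cross k Y 2 + k 2 * cross k Y 0 :=
      mul_left_cancel₀ hK2 (by linear_combination K * hm02 - k 0 * c2 - k 2 * c0)
    have g12 : h 1 2 = k 1 * cross k Y 2 + k 2 * cross k Y 1 :=
      mul_left_cancel₀ hK2 (by linear_combination K * hm12 - k 1 * c2 - k 2 * c1)
    intro i j
    fin_cases i <;> fin_cases j
    · exact g00
    · exact g01
    · exact g02
    · show h 1 0 = k 1 * cross k Y 0 + k 0 * cross k Y 1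
      rw [h_symm 1 0, g01]; ring
    · exact g11
    · exact g12
    · show h 2 0 = k 2 * cross k Y 0 + k 0 * cross k Y 2
      rw [h_symm 2 0, g02]; ring
    · show h 2 1 = k 2 * cross k Y 1 + k 1 * cross k Y 2
      rw [h_symm 2 1, g12]; ring
    · exact g22
  · rintro ⟨Y, hY⟩ i j
    fin_cases i <;> fin_cases j <;>
      simp [sigQ, cross, eps, kdelta, Fin.sum_univ_three, hY] <;> ring
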